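/- Let V be a nonzero finite-dimensional complex inner product space and let T₁,…,T_d be pairwise commuting self-adjoint endomorphisms of V. For c = (c₁,…,c_d) ∈ ℝ^d set φ_c(x) = Σ_{i=1}^d (x_i − c_i)². Then the spectrum of the self-adjoint operator Σ_{i=1}^d (T_i − c_i·Id)² is exactly the image of the joint spectrum of (T₁,…,T_d) under φ_c; in particular, the minimum of the spectrum of Σᵢ(T_i − c_i)² equals the square of the euclidean distance from c to the joint spectrum. -/

import Mathlib

open Module.End LinearMap Submodule in
/-- **Spectrum of `Σᵢ (Tᵢ − cᵢ)²` and distance to the joint spectrum.** Let `V` be a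
nonzero finite-dimensional complex inner product space and let `T₁, …, T_d` be pairwise
commuting self-adjoint (symmetric) endomorphisms of `V`. For `c ∈ ℝ^d` and
`φ_c(x) = Σᵢ (xᵢ − cᵢ)²`, the spectrum of `Σᵢ (Tᵢ − cᵢ·Id)²` is exactly the image under
`φ_c` of the joint spectrum of `(T₁, …, T_d)`, and its infimum is the square of the
euclidean distance from `c` to the joint spectrum. -/
theorem spectrum_sum_squares_eq_image_jointSpectrum
    {V : Type*} [NormedAddCommGroup V] [InnerProductSpace ℂ V]
    [FiniteDimensional ℂ V] [Nontrivial V]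
    (d : ℕ) (T : Fin d → Module.End ℂ V)
    (hsa : ∀ i, LinearMap.IsSymmetric (T i))
    (hcomm : ∀ i j, Commute (T i) (T j))
    (c : EuclideanSpace ℝ (Fin d)) :
    spectrum ℝ (∑ i, (T i - (c i : ℂ) • 1) ^ 2)
        = (fun lam : EuclideanSpace ℝ (Fin d) => ∑ i, (lam i - c i) ^ 2) ''
          {lam : EuclideanSpace ℝ (Fin d) | ∃ v : V, v ≠ 0 ∧
            ∀ i, T i v = (lam i : ℂ) • v} ∧
    sInf (spectrum ℝ (∑ i, (T i - (c i : ℂ) • 1) ^ 2))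
        = (Metric.infDist c {lam : EuclideanSpace ℝ (Fin d) | ∃ v : V, v ≠ 0 ∧
            ∀ i, T i v = (lam i : ℂ) • v}) ^ 2 := by
  classical
  set φ : (Fin d → ℂ) → ℂ := fun χ => ∑ i, (χ i - (c i : ℂ)) ^ 2 with hφ
  set S : Module.End ℂ V := ∑ i, (T i - (c i : ℂ) • 1) ^ 2 with hSdef
  set K : Set (EuclideanSpace ℝ (Fin d)) :=
    {lam | ∃ v : V, v ≠ 0 ∧ ∀ i, T i v = (lam i : ℂ) • v} with hKdef
  -- action of S on joint eigenvectors
  have hact : ∀ (χ : Fin d → ℂ) (v : V), (∀ i, T i v = χ i • v) → S v = φ χ • v := by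
    intro χ v hv
    have h1 : ∀ i, (((T i - (c i : ℂ) • 1) ^ 2 : Module.End ℂ V)) v
        = ((χ i - c i) ^ 2) • v := by
      intro i
      have h0 : (T i - (c i : ℂ) • 1) v = (χ i - (c i : ℂ)) • v := by
        simp [LinearMap.sub_apply, hv i, sub_smul]
      rw [sq, Module.End.mul_apply, h0, map_smul, h0, smul_smul, ← sq]
    rw [hSdef, LinearMap.sum_apply]
    simp_rw [h1]
    rw [← Finset.sum_smul]
  -- joint eigenspaces sit inside eigenspaces of S
  have hjoint_le : ∀ χ : Fin d → ℂ, (⨅ i, eigenspace (T i) (χ i)) ≤ eigenspace S (φ χ) := by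
    intro χ v hv
    rw [mem_eigenspace_iff]
    exact hact χ v fun i => mem_eigenspace_iff.mp (Submodule.mem_iInf _ |>.mp hv i)
  have htop : (⨆ χ : Fin d → ℂ, ⨅ i, eigenspace (T i) (χ i)) = ⊤ :=
    LinearMap.IsSymmetric.iSup_iInf_eq_top_of_commute hsa fun i j _ => hcomm i j
  -- joint eigenvalues are real
  have hreal : ∀ (χ : Fin d → ℂ) (v : V), v ≠ 0 → (∀ i, T i v = χ i • v) →
      ∃ lam : EuclideanSpace ℝ (Fin d), (∀ i, (lam i : ℂ) = χ i) ∧ lam ∈ K := by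
    intro χ v hv0 hv
    have hr : ∀ i, (((χ i).re : ℝ) : ℂ) = χ i := by
      intro i
      have := (hsa i).conj_eigenvalue_eq_self
        (hasEigenvalue_of_hasEigenvector ⟨mem_eigenspace_iff.mpr (hv i), hv0⟩)
      exact Complex.conj_eq_iff_re.mp this
    exact ⟨(WithLp.toLp 2 (fun i => (χ i).re) : EuclideanSpace ℝ (Fin d)), hr,
      ⟨v, hv0, fun i => by show T i v = (((χ i).re : ℝ) : ℂ) • v; rw [hr i]; exact hv i⟩⟩
  have hspec : spectrum ℝ S
      = (fun lam : EuclideanSpace ℝ (Fin d) => ∑ i, (lam i - c i) ^ 2) '' K := by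
    ext r
    constructor
    · intro hr
      have hev : Module.End.HasEigenvalue S (r : ℂ) := by
        rw [Module.End.hasEigenvalue_iff_mem_spectrum]
        simpa using spectrum.algebraMap_mem ℂ hr
      by_cases hx : ∃ χ : Fin d → ℂ, (⨅ i, eigenspace (T i) (χ i)) ≠ ⊥ ∧ φ χ = (r : ℂ)
      · obtain ⟨χ, hne, hφχ⟩ := hx
        obtain ⟨v, hvmem, hv0⟩ := Submodule.exists_mem_ne_zero_of_ne_bot hne
        have hv : ∀ i, T i v = χ i • v := fun i =>
          mem_eigenspace_iff.mp (Submodule.mem_iInf _ |>.mp hvmem i)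
        obtain ⟨lam, hlam, hlamK⟩ := hreal χ v hv0 hv
        refine ⟨lam, hlamK, ?_⟩
        have hco : ((∑ i, (lam i - c i) ^ 2 : ℝ) : ℂ) = (r : ℂ) := by
          push_cast
          rw [← hφχ, hφ]
          exact Finset.sum_congr rfl fun i _ => by rw [hlam i]
        exact_mod_cast hco
      · exfalso
        push_neg at hx
        have hle : (⨆ χ : Fin d → ℂ, ⨅ i, eigenspace (T i) (χ i)) ≤
            ⨆ μ, ⨆ _ : μ ≠ (r : ℂ), eigenspace S μ := by
          refine iSup_le fun χ => ?_
          by_cases hb : (⨅ i, eigenspace (T i) (χ i)) = ⊥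
          · simp [hb]
          · exact le_trans (hjoint_le χ)
              (le_iSup₂ (f := fun μ _ => eigenspace S μ) (φ χ) (hx χ hb))
        rw [htop] at hle
        have hdisj := Module.End.eigenspaces_iSupIndep S (r : ℂ)
        have hbot : eigenspace S (r : ℂ) = ⊥ := by
          have : (⨆ μ, ⨆ _ : μ ≠ (r : ℂ), eigenspace S μ) = ⊤ := top_le_iff.mp hle
          rw [this] at hdisj
          exact (disjoint_top.mp hdisj)
        exact hev hbot
    · rintro ⟨lam, ⟨v, hv0, hv⟩, rfl⟩
      have hSv : S v = ((∑ i, (lam i - c i) ^ 2 : ℝ) : ℂ) • v := by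
        rw [hact (fun i => (lam i : ℂ)) v hv, hφ]
        push_cast
        rfl
      have hev : Module.End.HasEigenvalue S ((∑ i, (lam i - c i) ^ 2 : ℝ) : ℂ) :=
        hasEigenvalue_of_hasEigenvector ⟨mem_eigenspace_iff.mpr hSv, hv0⟩
      have hmem : ((∑ i, (lam i - c i) ^ 2 : ℝ) : ℂ) ∈ spectrum ℂ S :=
        Module.End.hasEigenvalue_iff_mem_spectrum.mp hev
      exact spectrum.of_algebraMap_mem ℂ (by simpa using hmem)
  refine ⟨hspec, ?_⟩
  -- K is nonempty
  have hKne : K.Nonempty := by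
    have hxne : ∃ χ : Fin d → ℂ, (⨅ i, eigenspace (T i) (χ i)) ≠ ⊥ := by
      by_contra h
      push_neg at h
      simp only [h, iSup_bot] at htop
      obtain ⟨v, hv⟩ := exists_ne (0 : V)
      have hvbot : v ∈ (⊥ : Submodule ℂ V) := by rw [htop]; trivial
      exact hv ((Submodule.mem_bot ℂ).mp hvbot)
    obtain ⟨χ, hne⟩ := hxne
    obtain ⟨v, hvmem, hv0⟩ := Submodule.exists_mem_ne_zero_of_ne_bot hne
    obtain ⟨lam, _, hlamK⟩ := hreal χ v hv0
      (fun i => mem_eigenspace_iff.mp (Submodule.mem_iInf _ |>.mp hvmem i))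
    exact ⟨lam, hlamK⟩
  rw [hspec]
  set D : Set ℝ := (fun lam => dist c lam) '' K with hDdef
  have hdist : ∀ lam ∈ K, (∑ i, (lam i - c i) ^ 2) = dist c lam ^ 2 := by
    intro lam _
    rw [EuclideanSpace.dist_eq,
      Real.sq_sqrt (Finset.sum_nonneg fun i _ => sq_nonneg _)]
    exact Finset.sum_congr rfl fun i _ => by
      rw [Real.dist_eq, sq_abs]; ring
  have h2 : (fun lam : EuclideanSpace ℝ (Fin d) => ∑ i, (lam i - c i) ^ 2) '' K
      = (fun x : ℝ => max x 0 ^ 2) '' D := by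
    rw [hDdef, Set.image_image]
    exact Set.image_congr fun lam hlam => by
      rw [max_eq_left dist_nonneg, ← hdist lam hlam]
  have hmono : Monotone fun x : ℝ => max x 0 ^ 2 := fun a b h =>
    pow_le_pow_left₀ (le_max_right _ _) (max_le_max h le_rfl) 2
  have hcont : ContinuousAt (fun x : ℝ => max x 0 ^ 2) (sInf D) :=
    ((continuous_id.max continuous_const).pow 2).continuousAt
  have hDne : D.Nonempty := hKne.image _
  have hDbdd : BddBelow D := ⟨0, by rintro x ⟨lam, _, rfl⟩; exact dist_nonneg⟩
  have h3 : sInf ((fun x : ℝ => max x 0 ^ 2) '' D) = max (sInf D) 0 ^ 2 :=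
    (hmono.map_csInf_of_continuousAt hcont hDne hDbdd).symm
  have hInfD0 : 0 ≤ sInf D :=
    Real.sInf_nonneg (by rintro x ⟨lam, _, rfl⟩; exact dist_nonneg)
  have hinfdist : Metric.infDist c K = sInf D := by
    rw [Metric.infDist_eq_iInf, iInf, hDdef, Set.image_eq_range]
  rw [h2, h3, max_eq_left hInfD0, hinfdist]
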